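/- Let s be a nonzero complex number and for each positive integer n define [n] = i^{-(n+1)}·s^n + i^{(n+1)}·s^{-n}. Then for every positive integer n, the recursion [2n]·[2]/2 = [1]^2·(2n − [n]^2/2 − ∑_{k=1}^{n−1} [k]^2) holds. -/

import Mathlib

open Complex Finset

lemma aux_step (s z w : ℂ) (hs : s ≠ 0) (hz : z ≠ 0) (hw4 : w^4 = 1) :
    ((-I) * w⁻¹^2 * (z*s)^2 + I * w^2 * ((z*s)⁻¹)^2
      - (I * w⁻¹^2 * z^2 + (-I) * w^2 * (z⁻¹)^2)) * (I*s^2 + (-I)*(s⁻¹)^2) / 2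
    = (-(s+s⁻¹))^2 * (2 - ((-I)*w⁻¹*(z*s) + I*w*((z*s)⁻¹))^2/2 - (w⁻¹*z + w*z⁻¹)^2/2) := by
  have hw : w ≠ 0 := by intro h; rw [h] at hw4; norm_num at hw4
  have hwi : w⁻¹ = w^3 := inv_eq_of_mul_eq_one_right (by linear_combination hw4)
  rw [hwi]
  field_simp
  linear_combination
    (w^2*(-(w^4*z^4*s^4)+1-s^2*(w^4*z^4-1))*(s^4-1)+(s^2+1)^2*w^2*(1-w^2*z^2*s^2)^2) * Complex.I_sq
    + ((s^2+1)^2*(w^2*z^4*s^2 + 2*z^2*s^2) - (-w^2*z^4*s^2*(s^2+1)*(s^4-1) - 2*z^2*s^2*(s^2+1)^2 + w^2*z^4*s^4*(s^2+1)^2)) * hw4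

theorem stmt_2 (s : ℂ) (hs : s ≠ 0)
    (a : ℕ → ℂ)
    (ha : ∀ n : ℕ, 0 < n → a n = I ^ (-(n + 1 : ℤ)) * s ^ (n : ℤ) + I ^ ((n + 1 : ℤ)) * s ^ (-(n : ℤ))) :
    ∀ n : ℕ, 0 < n →
      a (2 * n) * a 2 / 2 =
        (a 1) ^ 2 * ((2 * n : ℂ) - (a n) ^ 2 / 2 - ∑ k ∈ Finset.Icc 1 (n - 1), (a k) ^ 2) := by
  have hIne : (I:ℂ) ≠ 0 := I_ne_zero
  have i2 : (I:ℂ)^(2:ℤ) = -1 := by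
    rw [show (2:ℤ) = ((2:ℕ):ℤ) from rfl, zpow_natCast, I_sq]
  have i3 : (I:ℂ)^(3:ℤ) = -I := by
    rw [show (3:ℤ) = ((3:ℕ):ℤ) from rfl, zpow_natCast, pow_succ, I_sq]
    ring
  have hA1 : a 1 = -(s + s⁻¹) := by
    rw [ha 1 one_pos]
    push_cast
    rw [zpow_neg, zpow_neg, i2]
    norm_num
    ring
  have hA2 : a 2 = I * s^2 + (-I) * (s⁻¹)^2 := by
    rw [ha 2 two_pos]
    push_cast
    rw [zpow_neg, zpow_neg, i3, inv_neg, inv_I,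
      show (2:ℤ) = ((2:ℕ):ℤ) from rfl, zpow_natCast]
    ring
  intro n hn
  induction n with
  | zero => exact absurd hn (by norm_num)
  | succ m ih =>
    rcases Nat.eq_zero_or_pos m with rfl | hm
    · -- base case n = 1
      norm_num
      rw [hA1, hA2]
      field_simp
      linear_combination (1 - 2*s^4 + s^8) * Complex.I_sq
    · obtain ⟨p, rfl⟩ : ∃ p, m = p + 1 := ⟨m - 1, by omega⟩
      have key := ih (by omega)
      set z : ℂ := s ^ ((p:ℤ)+1) with hzdef
      set w : ℂ := I ^ ((p:ℤ)+1+1) with hwdef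
      have hz : z ≠ 0 := zpow_ne_zero _ hs
      have hw4 : w^4 = 1 := by
        rw [hwdef, ← zpow_natCast (I ^ ((p:ℤ)+1+1)) 4, ← zpow_mul,
          show ((p:ℤ)+1+1)*((4:ℕ):ℤ) = 4*((p:ℤ)+1+1) by push_cast; ring, zpow_mul,
          show ((4:ℤ)) = ((4:ℕ):ℤ) from rfl, zpow_natCast,
          show (I:ℂ)^(4:ℕ) = 1 by rw [show (4:ℕ) = 2*2 from rfl, pow_mul, I_sq]; norm_num,
          one_zpow]
      have him : (I:ℂ)^(-1:ℤ) = -I := by rw [zpow_neg, zpow_one, inv_I]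
      have hAn : a (p+1) = w⁻¹ * z + w * z⁻¹ := by
        rw [ha (p+1) (by omega)]
        push_cast
        rw [zpow_neg, zpow_neg, ← hwdef, ← hzdef]
      have hAn1 : a (p+1+1) = (-I) * w⁻¹ * (z*s) + I * w * ((z*s)⁻¹) := by
        rw [ha (p+1+1) (by omega)]
        push_cast
        rw [zpow_neg, zpow_neg, zpow_add_one₀ hIne ((p:ℤ)+1+1),
          zpow_add_one₀ hs ((p:ℤ)+1), ← hwdef, ← hzdef, mul_inv, inv_I]
        ring
      have hA2n : a (2*(p+1)) = I * w⁻¹^2 * z^2 + (-I) * w^2 * (z⁻¹)^2 := by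
        rw [ha (2*(p+1)) (by omega)]
        push_cast
        rw [zpow_neg, zpow_neg,
          show 2*((p:ℤ)+1)+1 = ((p:ℤ)+1+1)+(((p:ℤ)+1+1)+(-1)) by ring,
          show 2*((p:ℤ)+1) = ((p:ℤ)+1)+((p:ℤ)+1) by ring,
          zpow_add₀ hIne ((p:ℤ)+1+1), zpow_add₀ hIne ((p:ℤ)+1+1),
          zpow_add₀ hs ((p:ℤ)+1), him, ← hwdef, ← hzdef,
          mul_inv, mul_inv, inv_neg, inv_I]
        ring
      have hA2n2 : a (2*(p+1+1)) = (-I) * w⁻¹^2 * (z*s)^2 + I * w^2 * ((z*s)⁻¹)^2 := by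
        rw [ha (2*(p+1+1)) (by omega)]
        push_cast
        rw [zpow_neg, zpow_neg,
          show 2*((p:ℤ)+1+1)+1 = ((p:ℤ)+1+1)+(((p:ℤ)+1+1)+1) by ring,
          show 2*((p:ℤ)+1+1) = ((p:ℤ)+1)+(((p:ℤ)+1)+1+1) by ring,
          zpow_add₀ hIne ((p:ℤ)+1+1), zpow_add_one₀ hIne ((p:ℤ)+1+1),
          zpow_add₀ hs ((p:ℤ)+1), zpow_add_one₀ hs ((p:ℤ)+1+1),
          zpow_add_one₀ hs ((p:ℤ)+1), ← hwdef, ← hzdef,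
          mul_inv, mul_inv, inv_I]
        ring
      simp only [Nat.add_sub_cancel] at key ⊢
      rw [Finset.sum_Icc_succ_top (by omega : 1 ≤ p+1)]
      rw [hA1, hA2, hAn, hAn1, hA2n2]
      rw [hA1, hA2, hAn, hA2n] at key
      push_cast at key ⊢
      linear_combination key + aux_step s z w hs hz hw4
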